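/- Let G be a finite simple graph with surplus(G) ≥ s for some natural number s. Then for every set S of exactly s vertices of G, the induced subgraph G − S satisfies LP(G − S) = LP(G) − s/2. -/

import Mathlib

open scoped Classical

/-- A fractional vertex cover of `G`. -/
def IsFVC {V : Type} (G : SimpleGraph V) (x : V → ℝ) : Prop :=
  (∀ v, 0 ≤ x v ∧ x v ≤ 1) ∧ ∀ ⦃u v⦄, G.Adj u v → 1 ≤ x u + x v

/-- The weight of a fractional vertex cover. -/
noncomputable def fvcWeight {V : Type} [Fintype V] (x : V → ℝ) : ℝ := ∑ v, x v

/-- `LP(G)`: the minimum weight of a fractional vertex cover of `G`. -/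
noncomputable def LPopt {V : Type} [Fintype V] (G : SimpleGraph V) : ℝ :=
  sInf {w : ℝ | ∃ x : V → ℝ, IsFVC G x ∧ w = fvcWeight x}

/-- A matching of `G`: a set of pairwise vertex-disjoint edges of `G`. -/
def IsMatchingSet {V : Type} (G : SimpleGraph V) (M : Finset (Sym2 V)) : Prop :=
  (∀ e ∈ M, e ∈ G.edgeSet) ∧ ∀ e ∈ M, ∀ f ∈ M, e ≠ f → ∀ v : V, v ∈ e → v ∉ f

/-- `MM(G)`: the maximum size of a matching of `G`. -/
noncomputable def MMnum {V : Type} (G : SimpleGraph V) : ℕ :=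
  sSup {n : ℕ | ∃ M : Finset (Sym2 V), IsMatchingSet G M ∧ M.card = n}

/-- `OPT(G)`: the minimum size of a vertex cover of `G`. -/
noncomputable def VCnum {V : Type} (G : SimpleGraph V) : ℕ :=
  sInf {n : ℕ | ∃ S : Finset V, (∀ ⦃u v⦄, G.Adj u v → u ∈ S ∨ v ∈ S) ∧ S.card = n}

/-- `N(X)`: the set of vertices outside `X` having a neighbour in `X`. -/
def nbhd {V : Type} (G : SimpleGraph V) (X : Set V) : Set V :=
  {v | v ∉ X ∧ ∃ u ∈ X, G.Adj u v}

/-- `X` is an independent set in `G`. -/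
def IndepSet {V : Type} (G : SimpleGraph V) (X : Set V) : Prop :=
  ∀ u ∈ X, ∀ v ∈ X, ¬ G.Adj u v

/-- `surplus(G) ≥ s`: every nonempty independent set `X` satisfies `|N(X)| ≥ |X| + s`. -/
def SurplusGE {V : Type} (G : SimpleGraph V) (s : ℕ) : Prop :=
  ∀ X : Set V, X.Nonempty → IndepSet G X → X.ncard + s ≤ (nbhd G X).ncard

/-- The matching `M` saturates the vertex `v`. -/
def Saturates {V : Type} (M : Finset (Sym2 V)) (v : V) : Prop := ∃ e ∈ M, v ∈ e

/-- `O(G)`: vertices left unsaturated by some maximum matching of `G`. -/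
def OSet {V : Type} (G : SimpleGraph V) : Set V :=
  {v | ∃ M : Finset (Sym2 V), IsMatchingSet G M ∧ M.card = MMnum G ∧ ¬ Saturates M v}

/-- `I(G)`: vertices outside `O(G)` having a neighbour in `O(G)`. -/
def ISet {V : Type} (G : SimpleGraph V) : Set V := nbhd G (OSet G)

/-- `P(G)`: the remaining vertices. -/
def GEPSet {V : Type} (G : SimpleGraph V) : Set V := (OSet G ∪ ISet G)ᶜ


lemma fvc_lower {V : Type} [Fintype V] (G : SimpleGraph V)
    (h : ∀ X : Set V, X.Nonempty → (∀ u ∈ X, ∀ v ∈ X, ¬ G.Adj u v) → X.ncard ≤ {v | v ∉ X ∧ ∃ u ∈ X, G.Adj u v}.ncard)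
    (x : V → ℝ) (hx0 : ∀ v, 0 ≤ x v ∧ x v ≤ 1) (hxe : ∀ ⦃u v⦄, G.Adj u v → 1 ≤ x u + x v) :
    (Fintype.card V : ℝ) / 2 ≤ ∑ v, x v := by
  classical
  set X : Finset V := Finset.univ.filter (fun v => x v < 1/2) with hXdef
  -- Hall condition
  have hall : ∀ s : Finset {v // v ∈ X}, s.card ≤ (s.biUnion (fun u => G.neighborFinset u.1)).card := by
    intro s
    rcases s.eq_empty_or_nonempty with rfl | hs
    · simp
    · set X' : Set V := ↑(s.image Subtype.val) with hX'def
      have hX'ne : X'.Nonempty := by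
        obtain ⟨u, hu⟩ := hs
        exact ⟨u.1, Finset.mem_coe.mpr (Finset.mem_image.mpr ⟨u, hu, rfl⟩)⟩
      have hX'sub : ∀ v ∈ X', x v < 1/2 := by
        intro v hv
        simp only [hX'def, Finset.coe_image, Set.mem_image, Finset.mem_coe] at hv
        obtain ⟨u, _, rfl⟩ := hv
        exact (Finset.mem_filter.mp u.2).2
      have hind : ∀ u ∈ X', ∀ v ∈ X', ¬ G.Adj u v := by
        intro u hu v hv hadj
        have := hxe hadj
        have h1 := hX'sub u hu
        have h2 := hX'sub v hv
        linarith
      have hkey := h X' hX'ne hind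
      have hcard : X'.ncard = s.card := by
        rw [hX'def, Set.ncard_coe_finset, Finset.card_image_of_injective _ Subtype.val_injective]
      have hsub : {v | v ∉ X' ∧ ∃ u ∈ X', G.Adj u v} ⊆ ↑(s.biUnion (fun u => G.neighborFinset u.1)) := by
        rintro v ⟨-, u, huX', hadj⟩
        simp only [hX'def, Finset.coe_image, Set.mem_image, Finset.mem_coe] at huX'
        obtain ⟨u', hu', rfl⟩ := huX'
        simp only [Finset.coe_biUnion, Set.mem_iUnion, Finset.mem_coe]
        exact ⟨u', hu', by simpa using hadj⟩
      calc s.card = X'.ncard := hcard.symm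
        _ ≤ _ := hkey
        _ ≤ (↑(s.biUnion (fun u => G.neighborFinset u.1)) : Set V).ncard :=
            Set.ncard_le_ncard hsub (Set.toFinite _)
        _ = (s.biUnion (fun u => G.neighborFinset u.1)).card := Set.ncard_coe_finset _
  obtain ⟨f, hfinj, hfmem⟩ := (Finset.all_card_le_biUnion_card_iff_exists_injective _).mp hall
  have hfadj : ∀ u : {v // v ∈ X}, G.Adj u.1 (f u) := fun u => by simpa using hfmem u
  have hfbig : ∀ u : {v // v ∈ X}, (1:ℝ)/2 < x (f u) := by
    intro u
    have h1 := hxe (hfadj u)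
    have h2 : x u.1 < 1/2 := (Finset.mem_filter.mp u.2).2
    linarith
  set Y : Finset V := Finset.univ.image f with hYdef
  have hYX : ∀ v ∈ Y, v ∉ X := by
    intro v hv hvX
    simp only [hYdef, Finset.mem_image] at hv
    obtain ⟨u, -, rfl⟩ := hv
    have := (Finset.mem_filter.mp hvX).2
    linarith [hfbig u]
  have hYsub : Y ⊆ Xᶜ := fun v hv => Finset.mem_compl.mpr (hYX v hv)
  have hYcard : Y.card = X.card := by
    rw [hYdef, Finset.card_image_of_injective _ hfinj, Finset.card_univ, Fintype.card_coe]
  -- sum decomposition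
  have hsplit : ∑ v, x v = ∑ v ∈ X, x v + (∑ v ∈ Y, x v + ∑ v ∈ Xᶜ \ Y, x v) := by
    have h1 : ∑ v ∈ Xᶜ \ Y, x v + ∑ v ∈ Y, x v = ∑ v ∈ Xᶜ, x v := Finset.sum_sdiff hYsub
    have h2 : ∑ v ∈ X, x v + ∑ v ∈ Xᶜ, x v = ∑ v, x v := Finset.sum_add_sum_compl X x
    linarith
  have hXY : (X.card : ℝ) ≤ ∑ v ∈ X, x v + ∑ v ∈ Y, x v := by
    have e1 : ∑ v ∈ X, x v = ∑ u : {v // v ∈ X}, x u.1 := (Finset.sum_coe_sort X x).symm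
    have e2 : ∑ v ∈ Y, x v = ∑ u : {v // v ∈ X}, x (f u) := by
      rw [hYdef, Finset.sum_image (fun a _ b _ hab => hfinj hab)]
    rw [e1, e2, ← Finset.sum_add_distrib]
    calc (X.card : ℝ) = ∑ _u : {v // v ∈ X}, (1:ℝ) := by
          simp [Finset.card_univ, Fintype.card_coe]
      _ ≤ _ := Finset.sum_le_sum (fun u _ => hxe (hfadj u))
  have hrest : ((Xᶜ \ Y).card : ℝ) * (1/2) ≤ ∑ v ∈ Xᶜ \ Y, x v := by
    calc ((Xᶜ \ Y).card : ℝ) * (1/2) = ∑ _v ∈ Xᶜ \ Y, (1/2:ℝ) := by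
          rw [Finset.sum_const, nsmul_eq_mul]
      _ ≤ ∑ v ∈ Xᶜ \ Y, x v := by
          refine Finset.sum_le_sum (fun v hv => ?_)
          have hvX : v ∉ X := Finset.mem_compl.mp (Finset.mem_sdiff.mp hv).1
          have hnot : ¬ x v < 1/2 := fun hlt => hvX (Finset.mem_filter.mpr ⟨Finset.mem_univ _, hlt⟩)
          linarith [not_lt.mp hnot]
  have hcards : Fintype.card V = X.card + Y.card + (Xᶜ \ Y).card := by
    rw [Finset.card_sdiff_of_subset hYsub, Finset.card_compl]
    have : Y.card ≤ Fintype.card V - X.card := by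
      rw [← Finset.card_compl]; exact Finset.card_le_card hYsub
    have hXle : X.card ≤ Fintype.card V := Finset.card_le_univ X
    omega
  have : ((X.card : ℝ) + Y.card + (Xᶜ \ Y).card) / 2 ≤ ∑ v, x v := by
    rw [hsplit, hYcard]
    have := hrest
    linarith
  rw [hcards]
  push_cast
  exact this

lemma lp_eq_half_card {V : Type} [Fintype V] (G : SimpleGraph V) (h : SurplusGE G 0) :
    LPopt G = (Fintype.card V : ℝ) / 2 := by
  classical
  have h' : ∀ X : Set V, X.Nonempty → (∀ u ∈ X, ∀ v ∈ X, ¬ G.Adj u v) →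
      X.ncard ≤ {v | v ∉ X ∧ ∃ u ∈ X, G.Adj u v}.ncard := by
    intro X hne hind
    exact h X hne hind
  have hmem : (Fintype.card V : ℝ) / 2 ∈ {w : ℝ | ∃ x : V → ℝ, IsFVC G x ∧ w = fvcWeight x} := by
    refine ⟨fun _ => 1/2, ⟨fun v => by norm_num, fun u v _ => by norm_num⟩, ?_⟩
    simp [fvcWeight, Finset.sum_const, nsmul_eq_mul]
    ring
  have hlb : ∀ w ∈ {w : ℝ | ∃ x : V → ℝ, IsFVC G x ∧ w = fvcWeight x},
      (Fintype.card V : ℝ) / 2 ≤ w := by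
    rintro w ⟨x, ⟨hx0, hxe⟩, rfl⟩
    exact fvc_lower G h' x hx0 hxe
  exact le_antisymm (csInf_le ⟨_, hlb⟩ hmem) (le_csInf ⟨_, hmem⟩ hlb)

lemma surplus_induce {V : Type} [Fintype V] (G : SimpleGraph V) (s : ℕ)
    (h : SurplusGE G s) (S : Set V) (hS : S.ncard = s) :
    SurplusGE (G.induce Sᶜ) 0 := by
  intro X hX hXind
  classical
  set X0 : Set V := Subtype.val '' X with hX0def
  have hX0ne : X0.Nonempty := hX.image _
  have hX0ind : IndepSet G X0 := by
    rintro u ⟨u', hu', rfl⟩ v ⟨v', hv', rfl⟩ hadj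
    exact hXind u' hu' v' hv' (by simpa using hadj)
  have hkey := h X0 hX0ne hX0ind
  have hsub : nbhd G X0 \ S ⊆ Subtype.val '' (nbhd (G.induce Sᶜ) X) := by
    rintro v ⟨⟨hvnot, u, huX0, hadj⟩, hvS⟩
    obtain ⟨u', hu', rfl⟩ := huX0
    refine ⟨⟨v, hvS⟩, ⟨?_, u', hu', by simpa using hadj⟩, rfl⟩
    intro hmem
    exact hvnot ⟨⟨v, hvS⟩, hmem, rfl⟩
  have h1 : (nbhd G X0).ncard ≤ (nbhd G X0 \ S).ncard + s := by
    rw [← hS]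
    exact Set.ncard_le_ncard_diff_add_ncard _ _ (Set.toFinite _)
  have h2 : (nbhd G X0 \ S).ncard ≤ (nbhd (G.induce Sᶜ) X).ncard := by
    calc (nbhd G X0 \ S).ncard ≤ (Subtype.val '' (nbhd (G.induce Sᶜ) X)).ncard :=
          Set.ncard_le_ncard hsub (Set.toFinite _)
      _ = (nbhd (G.induce Sᶜ) X).ncard :=
          Set.ncard_image_of_injective _ Subtype.val_injective
  have h3 : X.ncard = X0.ncard := (Set.ncard_image_of_injective _ Subtype.val_injective).symm
  omega

/-- If `surplus(G) ≥ s`, then deleting any `s` vertices drops `LP` by exactly `s/2`. -/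
theorem lp_drop_of_surplus {V : Type} [Fintype V] (G : SimpleGraph V) (s : ℕ)
    (hsur : SurplusGE G s) (S : Set V) (hS : S.ncard = s) :
    LPopt (G.induce Sᶜ) = LPopt G - (s : ℝ) / 2 := by
  classical
  have h0 : SurplusGE G 0 := fun X hne hind => le_trans (by omega) (hsur X hne hind)
  have hind0 : SurplusGE (G.induce Sᶜ) 0 := surplus_induce G s hsur S hS
  rw [lp_eq_half_card G h0, lp_eq_half_card _ hind0]
  have hsle : s ≤ Fintype.card V := by
    calc s = S.ncard := hS.symm
      _ ≤ (Set.univ : Set V).ncard := Set.ncard_le_ncard (Set.subset_univ S) (Set.toFinite _)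
      _ = Fintype.card V := by simp [Set.ncard_univ, Nat.card_eq_fintype_card]
  have hcS : Fintype.card S = s := by
    rw [← hS, Set.ncard_eq_toFinset_card', Set.toFinset_card]
  have hcard : Fintype.card ↥(Sᶜ) = Fintype.card V - s := by
    rw [Fintype.card_compl_set, hcS]
  rw [hcard]
  rw [Nat.cast_sub hsle]
  ring
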